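/- Let X be a real normed linear space. For all x, y ∈ X \ {0}, one has ‖x/‖x‖ − y/‖y‖‖ ≤ 4‖x − y‖/(‖x‖ + ‖y‖). In particular DW(X) ≤ 4. -/
import Mathlib

private lemma dw_aux {X : Type*} [NormedAddCommGroup X] [NormedSpace ℝ X]
    (x y : X) (hx : x ≠ 0) (hy : y ≠ 0) :
    ‖‖x‖⁻¹ • x - ‖y‖⁻¹ • y‖ ≤ 2 * ‖x - y‖ / ‖x‖ := by
  have hx0 : (0:ℝ) < ‖x‖ := norm_pos_iff.mpr hx
  have hy0 : (0:ℝ) < ‖y‖ := norm_pos_iff.mpr hy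
  have key : ‖x‖⁻¹ • x - ‖y‖⁻¹ • y = ‖x‖⁻¹ • (x - y) + (‖x‖⁻¹ - ‖y‖⁻¹) • y := by
    rw [smul_sub, sub_smul]; abel
  have h1 : ‖(‖x‖⁻¹ - ‖y‖⁻¹) • y‖ ≤ ‖x - y‖ / ‖x‖ := by
    rw [norm_smul, Real.norm_eq_abs]
    have : |‖x‖⁻¹ - ‖y‖⁻¹| = |‖y‖ - ‖x‖| / (‖x‖ * ‖y‖) := by
      rw [inv_sub_inv hx0.ne' hy0.ne', abs_div, abs_of_pos (mul_pos hx0 hy0)]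
    rw [this]
    have h2 : |‖y‖ - ‖x‖| ≤ ‖x - y‖ := by
      rw [← norm_neg (x - y), neg_sub]; exact abs_norm_sub_norm_le y x
    rw [div_mul_eq_mul_div, mul_comm ‖x‖ ‖y‖, ← div_div, mul_div_assoc,
      div_self hy0.ne', mul_one]
    gcongr
  calc ‖‖x‖⁻¹ • x - ‖y‖⁻¹ • y‖
      ≤ ‖‖x‖⁻¹ • (x - y)‖ + ‖(‖x‖⁻¹ - ‖y‖⁻¹) • y‖ := by rw [key]; exact norm_add_le _ _
    _ ≤ ‖x - y‖ / ‖x‖ + ‖x - y‖ / ‖x‖ := by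
        refine add_le_add ?_ h1
        rw [norm_smul, Real.norm_eq_abs, abs_of_pos (inv_pos.mpr hx0), inv_mul_eq_div]
    _ = 2 * ‖x - y‖ / ‖x‖ := by ring

private lemma dw_main {X : Type*} [NormedAddCommGroup X] [NormedSpace ℝ X]
    (x y : X) (hx : x ≠ 0) (hy : y ≠ 0) :
    ‖‖x‖⁻¹ • x - ‖y‖⁻¹ • y‖ ≤ 4 * ‖x - y‖ / (‖x‖ + ‖y‖) := by
  wlog h : ‖y‖ ≤ ‖x‖ generalizing x y
  · have := this y x hy hx (le_of_not_ge h)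
    rwa [← norm_neg (‖y‖⁻¹ • y - ‖x‖⁻¹ • x), neg_sub, ← norm_neg (y - x), neg_sub,
      add_comm ‖y‖ ‖x‖] at this
  have hx0 : (0:ℝ) < ‖x‖ := norm_pos_iff.mpr hx
  have hy0 : (0:ℝ) < ‖y‖ := norm_pos_iff.mpr hy
  refine (dw_aux x y hx hy).trans ?_
  rw [div_le_div_iff₀ hx0 (by linarith)]
  nlinarith [norm_nonneg (x - y)]

theorem dunkl_williams_inequality {X : Type*} [NormedAddCommGroup X] [NormedSpace ℝ X] :
    (∀ x y : X, x ≠ 0 → y ≠ 0 →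
      ‖‖x‖⁻¹ • x - ‖y‖⁻¹ • y‖ ≤ 4 * ‖x - y‖ / (‖x‖ + ‖y‖)) ∧
    sSup {c : ℝ | ∃ x y : X, x ≠ 0 ∧ y ≠ 0 ∧ x ≠ y ∧
      c = (‖x‖ + ‖y‖) / ‖x - y‖ * ‖‖x‖⁻¹ • x - ‖y‖⁻¹ • y‖} ≤ 4 := by
  refine ⟨fun x y hx hy => dw_main x y hx hy, ?_⟩
  refine Real.sSup_le ?_ (by norm_num)
  rintro c ⟨x, y, hx, hy, hxy, rfl⟩
  have hx0 : (0:ℝ) < ‖x‖ := norm_pos_iff.mpr hx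
  have hy0 : (0:ℝ) < ‖y‖ := norm_pos_iff.mpr hy
  have hd : (0:ℝ) < ‖x - y‖ := norm_sub_pos_iff.mpr hxy
  have := dw_main x y hx hy
  rw [div_mul_eq_mul_div, div_le_iff₀ hd]
  rw [le_div_iff₀ (by linarith : (0:ℝ) < ‖x‖ + ‖y‖)] at this
  calc (‖x‖ + ‖y‖) * ‖‖x‖⁻¹ • x - ‖y‖⁻¹ • y‖
      = ‖‖x‖⁻¹ • x - ‖y‖⁻¹ • y‖ * (‖x‖ + ‖y‖) := by ring
    _ ≤ 4 * ‖x - y‖ := this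
    _ = 4 * ‖x - y‖ := rfl
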